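/- arXiv:2411.03793 — 4 statements merged into one kernel-verified Lean document; each statement's English description precedes it below -/
import Mathlib

section
/- Let $(\Upsilon_{\nu})_{\nu\in\mathscr F}$ (indexed by finitely supported multi-indices) and $(b_j)_{j\ge1}$ be sequences of nonnegative reals such that $\Upsilon_{\mathbf 0}\le C_0$ and, for every nonzero finitely supported multi-index $\nu$, $\Upsilon_{\nu}\le C\sum_{\mathbf 0\neq m\le\nu}\binom{\nu}{m}(|m|!)^{\sigma}\,b^{m}\,\Upsilon_{\nu-m}$, where $C_0,C>0$ and $\sigma\ge1$. Then for every finitely supported multi-index $\nu$, $\Upsilon_{\nu}\le C_0\,a_{|\nu|}\,(|\nu|!)^{\sigma}\,b^{\nu}$, where $a_0=1$ and $a_k=C(C+1)^{k-1}$ for $k\ge1$. -/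
open Finset

/-- `|ν|`: the order (modulus) of a finitely supported multi-index. -/
def msize (ν : ℕ →₀ ℕ) : ℕ := ν.sum fun _ n => n

/-- Multi-index binomial coefficient `∏_j C(ν_j, m_j)`. -/
def mchoose (ν m : ℕ →₀ ℕ) : ℕ := ∏ j ∈ ν.support, (ν j).choose (m j)

/-- `b^ν = ∏_j b_j^{ν_j}`. -/
noncomputable def mpow (b : ℕ → ℝ) (ν : ℕ →₀ ℕ) : ℝ := ∏ j ∈ ν.support, b j ^ ν j

lemma msize_add (x y : ℕ →₀ ℕ) : msize (x + y) = msize x + msize y := by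
  unfold msize
  rw [Finsupp.sum_add_index] <;> simp

lemma msize_single (a n : ℕ) : msize (Finsupp.single a n) = n := by
  unfold msize
  rw [Finsupp.sum_single_index rfl]

@[simp] lemma msize_zero : msize (0 : ℕ →₀ ℕ) = 0 := by
  simp [msize]

lemma msize_eq_zero {m : ℕ →₀ ℕ} : msize m = 0 ↔ m = 0 := by
  constructor
  · intro h
    ext j
    by_cases hj : j ∈ m.support
    · exact (Finset.sum_eq_zero_iff.mp h) j hj
    · simpa using Finsupp.notMem_support_iff.mp hj
  · intro h; simp [h]

lemma msize_sub_add {m ν : ℕ →₀ ℕ} (h : m ≤ ν) : msize m + msize (ν - m) = msize ν := by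
  rw [← msize_add, add_tsub_cancel_of_le h]

lemma mpow_eq_prod (b : ℕ → ℝ) (ν : ℕ →₀ ℕ) : mpow b ν = ν.prod fun j n => b j ^ n := rfl

lemma mpow_add (b : ℕ → ℝ) (x y : ℕ →₀ ℕ) : mpow b (x + y) = mpow b x * mpow b y := by
  simp only [mpow_eq_prod]
  exact Finsupp.prod_add_index (by simp) (fun j _ m n => pow_add (b j) m n)

@[simp] lemma mpow_zero (b : ℕ → ℝ) : mpow b 0 = 1 := by simp [mpow]

lemma mpow_nonneg {b : ℕ → ℝ} (hb : ∀ j, 0 ≤ b j) (ν : ℕ →₀ ℕ) : 0 ≤ mpow b ν :=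
  Finset.prod_nonneg fun j _ => pow_nonneg (hb j) _

lemma sum_Iic_single_add {M : Type*} [AddCommMonoid M] (a n : ℕ) (f : ℕ →₀ ℕ)
    (ha : a ∉ f.support) (F : (ℕ →₀ ℕ) → M) :
    ∑ m ∈ Iic (Finsupp.single a n + f), F m
      = ∑ p ∈ Finset.range (n + 1) ×ˢ Iic f, F (Finsupp.single a p.1 + p.2) := by
  have hfa : f a = 0 := Finsupp.notMem_support_iff.mp ha
  refine Finset.sum_bij' (i := fun m _ => ((m a, m.erase a) : ℕ × (ℕ →₀ ℕ)))
    (j := fun p _ => Finsupp.single a p.1 + p.2) ?_ ?_ ?_ ?_ ?_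
  · intro m hm
    rw [Finset.mem_Iic] at hm
    rw [Finset.mem_product, Finset.mem_range, Finset.mem_Iic]
    constructor
    · have := hm a
      simp only [Finsupp.add_apply, Finsupp.single_eq_same, hfa] at this
      omega
    · intro j
      by_cases hj : j = a
      · simp [hj, Finsupp.erase_same]
      · have := hm j
        simp only [Finsupp.add_apply, Finsupp.single_apply, if_neg (Ne.symm hj), hfa] at this
        simpa [Finsupp.erase_ne hj] using this
  · intro p hp
    rw [Finset.mem_product, Finset.mem_range, Finset.mem_Iic] at hp
    rw [Finset.mem_Iic]
    exact add_le_add (Finsupp.single_le_single.mpr (by omega)) hp.2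
  · intro m _
    exact Finsupp.single_add_erase a m
  · intro p hp
    rw [Finset.mem_product, Finset.mem_range, Finset.mem_Iic] at hp
    have hpa : p.2 a = 0 := by
      have := hp.2 a
      omega
    ext
    · simp [Finsupp.add_apply, Finsupp.single_apply, hpa]
    · rw [Finsupp.erase_add, Finsupp.erase_single, zero_add,
        Finsupp.erase_of_notMem_support (fun h => ha (Finsupp.support_mono hp.2 h))]
  · intro m _
    dsimp only
    rw [Finsupp.single_add_erase]

lemma mchoose_single_add {a n : ℕ} (i : ℕ) {f : ℕ →₀ ℕ} (m : ℕ →₀ ℕ)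
    (ha : a ∉ f.support) (hn : n ≠ 0) (hm : m ≤ f) :
    mchoose (Finsupp.single a n + f) (Finsupp.single a i + m) = n.choose i * mchoose f m := by
  have hfa : f a = 0 := Finsupp.notMem_support_iff.mp ha
  have hma : m a = 0 := by have := hm a; omega
  unfold mchoose
  rw [Finsupp.support_single_add ha hn, Finset.prod_cons]
  congr 1
  · simp [Finsupp.add_apply, Finsupp.single_eq_same, hfa, hma]
  · refine Finset.prod_congr rfl fun j hj => ?_
    have hja : j ≠ a := fun h => ha (h ▸ hj)
    simp [Finsupp.add_apply, Finsupp.single_apply, if_neg (Ne.symm hja)]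

/-- Multi-index Vandermonde identity. -/
lemma mchoose_sum_filter (ν : ℕ →₀ ℕ) :
    ∀ l, ∑ m ∈ (Iic ν).filter (fun m => msize m = l), mchoose ν m = (msize ν).choose l := by
  induction ν using Finsupp.induction with
  | zero =>
    intro l
    have h0 : Iic (0 : ℕ →₀ ℕ) = {0} := by
      ext m; simp [Finset.mem_Iic, le_zero_iff]
    cases l with
    | zero => simp [h0, mchoose, Finset.filter_singleton]
    | succ l => simp [h0]
  | single_add a n f haf hn ih =>
    intro l
    rw [Finset.sum_filter, sum_Iic_single_add a n f haf, Finset.sum_product]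
    have step1 : ∀ i ∈ Finset.range (n + 1), (∑ m ∈ Iic f,
        if msize (Finsupp.single a i + m) = l then
          mchoose (Finsupp.single a n + f) (Finsupp.single a i + m) else 0)
        = if i ≤ l then n.choose i * (msize f).choose (l - i) else 0 := by
      intro i _
      have hcongr : ∀ m ∈ Iic f,
          (if msize (Finsupp.single a i + m) = l then
            mchoose (Finsupp.single a n + f) (Finsupp.single a i + m) else 0)
          = (if i + msize m = l then n.choose i * mchoose f m else 0) := by
        intro m hm
        rw [Finset.mem_Iic] at hm
        rw [msize_add, msize_single, mchoose_single_add i m haf hn hm]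
      rw [Finset.sum_congr rfl hcongr]
      by_cases hil : i ≤ l
      · rw [if_pos hil, ← ih (l - i), Finset.sum_filter, Finset.mul_sum]
        refine Finset.sum_congr rfl fun m _ => ?_
        by_cases h : msize m = l - i
        · rw [if_pos (by omega), if_pos h]
        · rw [if_neg (by omega), if_neg h, mul_zero]
      · rw [if_neg hil]
        exact Finset.sum_eq_zero fun m _ => if_neg (by omega)
    rw [Finset.sum_congr rfl step1, msize_add, msize_single, Nat.add_choose_eq,
      Finset.Nat.sum_antidiagonal_eq_sum_range_succ_mk]
    have e1 : ∑ i ∈ Finset.range (n + 1),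
        (if i ≤ l then n.choose i * (msize f).choose (l - i) else 0)
        = ∑ i ∈ Finset.range (n + l + 2),
        (if i ≤ l then n.choose i * (msize f).choose (l - i) else 0) := by
      refine Finset.sum_subset (by intro x hx; rw [Finset.mem_range] at *; omega) ?_
      intro i _ hi
      rw [Finset.mem_range] at hi
      by_cases hil : i ≤ l
      · rw [if_pos hil, Nat.choose_eq_zero_of_lt (by omega), zero_mul]
      · rw [if_neg hil]
    have e2 : ∑ i ∈ Finset.range (l + 1), n.choose i * (msize f).choose (l - i)
        = ∑ i ∈ Finset.range (n + l + 2),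
        (if i ≤ l then n.choose i * (msize f).choose (l - i) else 0) := by
      rw [← Finset.sum_subset (s₁ := Finset.range (l + 1))
        (by intro x hx; rw [Finset.mem_range] at *; omega)
        (fun i _ hi => if_neg (by rw [Finset.mem_range] at hi; omega))]
      refine Finset.sum_congr rfl fun i hi => ?_
      rw [Finset.mem_range] at hi
      rw [if_pos (by omega)]
    rw [e1, ← e2]

lemma sum_mchoose_fiber (ν : ℕ →₀ ℕ) (g : ℕ → ℝ) :
    ∑ m ∈ Iic ν \ {0}, g (msize m) * (mchoose ν m : ℝ)
      = ∑ l ∈ Finset.Icc 1 (msize ν), g l * ((msize ν).choose l : ℝ) := by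
  have hmaps : ∀ m ∈ Iic ν \ {0}, msize m ∈ Finset.Icc 1 (msize ν) := by
    intro m hm
    rw [Finset.mem_sdiff, Finset.mem_Iic, Finset.mem_singleton] at hm
    rw [Finset.mem_Icc]
    have h1 : msize m ≠ 0 := fun h => hm.2 (msize_eq_zero.mp h)
    have h2 : msize m ≤ msize ν := by
      have := msize_sub_add hm.1; omega
    omega
  rw [← Finset.sum_fiberwise_of_maps_to hmaps (fun m => g (msize m) * (mchoose ν m : ℝ))]
  refine Finset.sum_congr rfl fun l hl => ?_
  rw [Finset.mem_Icc] at hl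
  have hfil : (Iic ν \ {0}).filter (fun m => msize m = l)
      = (Iic ν).filter (fun m => msize m = l) := by
    ext m
    simp only [Finset.mem_filter, Finset.mem_sdiff, Finset.mem_singleton]
    constructor
    · tauto
    · rintro ⟨h1, h2⟩
      refine ⟨⟨h1, fun h0 => ?_⟩, h2⟩
      subst h0
      simp at h2
      omega
  rw [hfil, ← mchoose_sum_filter ν l]
  push_cast
  rw [Finset.mul_sum]
  refine Finset.sum_congr rfl fun m hm => ?_
  rw [Finset.mem_filter] at hm
  rw [hm.2]

theorem stmt0 (Υ : (ℕ →₀ ℕ) → ℝ) (b : ℕ → ℝ) (C0 C σ : ℝ)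
    (hΥ : ∀ ν, 0 ≤ Υ ν) (hb : ∀ j, 0 ≤ b j)
    (hC0 : 0 < C0) (hC : 0 < C) (hσ : 1 ≤ σ)
    (h0 : Υ 0 ≤ C0)
    (hrec : ∀ ν : ℕ →₀ ℕ, ν ≠ 0 →
      Υ ν ≤ C * ∑ m ∈ Finset.Iic ν \ {0},
        (mchoose ν m : ℝ) * ((msize m).factorial : ℝ) ^ σ * mpow b m * Υ (ν - m)) :
    ∀ ν : ℕ →₀ ℕ,
      Υ ν ≤ C0 * (if msize ν = 0 then 1 else C * (C + 1) ^ (msize ν - 1)) *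
        ((msize ν).factorial : ℝ) ^ σ * mpow b ν := by
  set a : ℕ → ℝ := fun l => if l = 0 then 1 else C * (C + 1) ^ (l - 1) with ha_def
  have ha_nonneg : ∀ l, 0 ≤ a l := by
    intro l
    rw [ha_def]
    dsimp only
    split
    · norm_num
    · positivity
  have ha_sum : ∀ n : ℕ, ∑ j ∈ Finset.range (n + 1), a j = (C + 1) ^ n := by
    intro n
    induction n with
    | zero => simp [ha_def]
    | succ n ihn =>
      rw [Finset.sum_range_succ, ihn, ha_def]
      simp only [Nat.succ_ne_zero, if_false, Nat.add_sub_cancel]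
      ring
  have key : ∀ k : ℕ, ∀ ν : ℕ →₀ ℕ, msize ν = k →
      Υ ν ≤ C0 * a (msize ν) * ((msize ν).factorial : ℝ) ^ σ * mpow b ν := by
    intro k
    induction k using Nat.strong_induction_on with
    | _ k ih =>
      intro ν hν
      by_cases hν0 : ν = 0
      · subst hν0
        simp only [msize_zero, mpow_zero, Nat.factorial_zero, Nat.cast_one, Real.one_rpow,
          mul_one, ha_def, if_pos rfl]
        linarith
      · have hk0 : k ≠ 0 := fun h => hν0 (msize_eq_zero.mp (hν.trans h))
        set G : ℕ → ℝ := fun l =>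
          ((l.factorial : ℝ)) ^ σ * (((k - l).factorial : ℝ)) ^ σ * a (k - l) with hG_def
        have hterm : ∀ m ∈ Iic ν \ {0},
            (mchoose ν m : ℝ) * ((msize m).factorial : ℝ) ^ σ * mpow b m * Υ (ν - m)
              ≤ C0 * mpow b ν * (G (msize m) * (mchoose ν m : ℝ)) := by
          intro m hm
          rw [Finset.mem_sdiff, Finset.mem_Iic, Finset.mem_singleton] at hm
          obtain ⟨hm1, hm2⟩ := hm
          have hms : msize m + msize (ν - m) = k := by rw [msize_sub_add hm1, hν]
          have hm1' : msize m ≠ 0 := fun h => hm2 (msize_eq_zero.mp h)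
          have hlt : msize (ν - m) < k := by omega
          have hIH := ih (msize (ν - m)) hlt (ν - m) rfl
          have hmp : mpow b m * mpow b (ν - m) = mpow b ν := by
            rw [← mpow_add, add_tsub_cancel_of_le hm1]
          have hnn1 : (0:ℝ) ≤ (mchoose ν m : ℝ) := Nat.cast_nonneg _
          have hnn2 : (0:ℝ) ≤ ((msize m).factorial : ℝ) ^ σ :=
            Real.rpow_nonneg (Nat.cast_nonneg _) _
          have hnn3 : (0:ℝ) ≤ mpow b m := mpow_nonneg hb m
          calc (mchoose ν m : ℝ) * ((msize m).factorial : ℝ) ^ σ * mpow b m * Υ (ν - m)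
              ≤ (mchoose ν m : ℝ) * ((msize m).factorial : ℝ) ^ σ * mpow b m *
                (C0 * a (msize (ν - m)) * ((msize (ν - m)).factorial : ℝ) ^ σ * mpow b (ν - m)) := by
                refine mul_le_mul_of_nonneg_left hIH (by positivity)
            _ = C0 * mpow b ν * (G (msize m) * (mchoose ν m : ℝ)) := by
                rw [hG_def]
                dsimp only
                have : k - msize m = msize (ν - m) := by omega
                rw [this, ← hmp]
                ring
        have hsum1 : ∑ m ∈ Iic ν \ {0},
            (mchoose ν m : ℝ) * ((msize m).factorial : ℝ) ^ σ * mpow b m * Υ (ν - m)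
              ≤ C0 * mpow b ν * ∑ l ∈ Finset.Icc 1 k, G l * ((k.choose l : ℝ)) := by
          calc ∑ m ∈ Iic ν \ {0},
              (mchoose ν m : ℝ) * ((msize m).factorial : ℝ) ^ σ * mpow b m * Υ (ν - m)
              ≤ ∑ m ∈ Iic ν \ {0}, C0 * mpow b ν * (G (msize m) * (mchoose ν m : ℝ)) :=
                Finset.sum_le_sum hterm
            _ = C0 * mpow b ν * ∑ m ∈ Iic ν \ {0}, G (msize m) * (mchoose ν m : ℝ) := by
                rw [Finset.mul_sum]
            _ = C0 * mpow b ν * ∑ l ∈ Finset.Icc 1 k, G l * ((k.choose l : ℝ)) := by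
                rw [sum_mchoose_fiber ν G, hν]
        have hGl : ∀ l ∈ Finset.Icc 1 k, G l * (k.choose l : ℝ)
            ≤ ((k.factorial : ℝ)) ^ σ * a (k - l) := by
          intro l hl
          rw [Finset.mem_Icc] at hl
          have hlk : l ≤ k := hl.2
          have hcf : (k.choose l : ℝ) * (l.factorial : ℝ) * ((k - l).factorial : ℝ)
              = (k.factorial : ℝ) := by
            exact_mod_cast congrArg (Nat.cast (R := ℝ))
              (Nat.choose_mul_factorial_mul_factorial hlk)
          have hc1 : (1:ℝ) ≤ (k.choose l : ℝ) := by
            exact_mod_cast Nat.one_le_iff_ne_zero.mpr (Nat.choose_pos hlk).ne'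
          have hcσ : (k.choose l : ℝ) ≤ (k.choose l : ℝ) ^ σ := by
            nth_rewrite 1 [← Real.rpow_one (k.choose l : ℝ)]
            exact Real.rpow_le_rpow_of_exponent_le hc1 hσ
          have hstep : ((l.factorial : ℝ)) ^ σ * (((k - l).factorial : ℝ)) ^ σ *
              (k.choose l : ℝ) ≤ ((k.factorial : ℝ)) ^ σ := by
            calc ((l.factorial : ℝ)) ^ σ * (((k - l).factorial : ℝ)) ^ σ * (k.choose l : ℝ)
                ≤ ((l.factorial : ℝ)) ^ σ * (((k - l).factorial : ℝ)) ^ σ *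
                  (k.choose l : ℝ) ^ σ := by
                  refine mul_le_mul_of_nonneg_left hcσ (by positivity)
              _ = ((l.factorial : ℝ) * ((k - l).factorial : ℝ) * (k.choose l : ℝ)) ^ σ := by
                  rw [← Real.mul_rpow (by positivity) (by positivity),
                    ← Real.mul_rpow (by positivity) (by positivity)]
              _ = ((k.factorial : ℝ)) ^ σ := by
                  congr 1
                  linarith [hcf]
          calc G l * (k.choose l : ℝ)
              = (((l.factorial : ℝ)) ^ σ * (((k - l).factorial : ℝ)) ^ σ *
                (k.choose l : ℝ)) * a (k - l) := by rw [hG_def]; ring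
            _ ≤ ((k.factorial : ℝ)) ^ σ * a (k - l) :=
                mul_le_mul_of_nonneg_right hstep (ha_nonneg _)
        have hre : ∑ l ∈ Finset.Icc 1 k, a (k - l) = ∑ j ∈ Finset.range k, a j := by
          refine Finset.sum_bij' (i := fun l _ => k - l) (j := fun j _ => k - j)
            ?_ ?_ ?_ ?_ ?_
          · intro l hl; rw [Finset.mem_Icc] at hl; simp only [Finset.mem_range]; omega
          · intro j hj; rw [Finset.mem_range] at hj; simp only [Finset.mem_Icc]; omega
          · intro l hl; rw [Finset.mem_Icc] at hl; show k - (k - l) = l; omega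
          · intro j hj; rw [Finset.mem_range] at hj; show k - (k - j) = j; omega
          · intro l _; rfl
        have hsum2 : ∑ l ∈ Finset.Icc 1 k, G l * ((k.choose l : ℝ))
            ≤ ((k.factorial : ℝ)) ^ σ * (C + 1) ^ (k - 1) := by
          calc ∑ l ∈ Finset.Icc 1 k, G l * ((k.choose l : ℝ))
              ≤ ∑ l ∈ Finset.Icc 1 k, ((k.factorial : ℝ)) ^ σ * a (k - l) :=
                Finset.sum_le_sum hGl
            _ = ((k.factorial : ℝ)) ^ σ * ∑ l ∈ Finset.Icc 1 k, a (k - l) := by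
                rw [Finset.mul_sum]
            _ = ((k.factorial : ℝ)) ^ σ * (C + 1) ^ (k - 1) := by
                rw [hre]
                congr 1
                obtain ⟨k', rfl⟩ : ∃ k', k = k' + 1 := ⟨k - 1, by omega⟩
                rw [Nat.add_sub_cancel, ha_sum k']
        have hmpν : (0:ℝ) ≤ mpow b ν := mpow_nonneg hb ν
        have hfinal : Υ ν ≤ C * (C0 * mpow b ν * (((k.factorial : ℝ)) ^ σ * (C + 1) ^ (k - 1))) := by
          calc Υ ν ≤ C * ∑ m ∈ Finset.Iic ν \ {0},
              (mchoose ν m : ℝ) * ((msize m).factorial : ℝ) ^ σ * mpow b m * Υ (ν - m) :=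
                hrec ν hν0
            _ ≤ C * (C0 * mpow b ν * ∑ l ∈ Finset.Icc 1 k, G l * ((k.choose l : ℝ))) :=
                mul_le_mul_of_nonneg_left hsum1 hC.le
            _ ≤ C * (C0 * mpow b ν * (((k.factorial : ℝ)) ^ σ * (C + 1) ^ (k - 1))) := by
                refine mul_le_mul_of_nonneg_left ?_ hC.le
                exact mul_le_mul_of_nonneg_left hsum2 (by positivity)
        have haν : a (msize ν) = C * (C + 1) ^ (k - 1) := by
          rw [ha_def, hν]
          simp [hk0]
        rw [haν, hν]
        calc Υ ν ≤ C * (C0 * mpow b ν * (((k.factorial : ℝ)) ^ σ * (C + 1) ^ (k - 1))) := hfinal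
          _ = C0 * (C * (C + 1) ^ (k - 1)) * ((k.factorial : ℝ)) ^ σ * mpow b ν := by ring
  intro ν
  have := key (msize ν) ν rfl
  rw [ha_def] at this
  exact this
end

section
/- Let $0<\beta<1$ and $\varepsilon>0$, and let $\varphi_\beta(y)=\frac{1}{2\beta^{1/\beta}\Gamma(1+1/\beta)}e^{-|y|^{\beta}/\beta}$ be the $\beta$-Gaussian density with cumulative distribution function $\Phi_\beta$. Then for all $t\in(0,\tfrac12)$, $\exp\big(\tfrac{1}{\beta}|\Phi_\beta^{-1}(t)|^{\beta}\big)\le \frac{H_{\beta,\varepsilon}}{t^{1+\varepsilon}}$, where $H_{\beta,\varepsilon}=\frac{1}{(2\Gamma(1/\beta))^{1+\varepsilon}}\Big(\frac{1-\beta}{e\beta\varepsilon}\Big)^{\frac{(1-\beta)(1+\varepsilon)}{\beta}}(1+\varepsilon)^{\frac{1+\varepsilon}{\beta}}$. -/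
open Real Set MeasureTheory Filter

section Aux

lemma integrableF {β : ℝ} (hβ0 : 0 < β) (hβ1 : β < 1) :
    Integrable (fun y : ℝ => Real.exp (-|y| ^ β / β)) := by
  have hIoi : IntegrableOn (fun y : ℝ => Real.exp (-|y| ^ β / β)) (Ioi 0) := by
    have base : IntegrableOn
        (fun t : ℝ => t ^ ((1 - β) / β) * Real.exp (-(1 / β) * t)) (Ioi 0) := by
      have h := integrableOn_rpow_mul_exp_neg_mul_rpow
        (p := 1) (s := (1 - β) / β) (b := 1 / β)
        (by nlinarith [div_pos (by linarith : (0:ℝ) < 1 - β) hβ0]) one_pos (by positivity)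
      exact h.congr_fun (fun x hx => by simp only [Real.rpow_one]) measurableSet_Ioi
    have key := (integrableOn_Ioi_comp_rpow_iff'
      (fun t : ℝ => t ^ ((1 - β) / β) * Real.exp (-(1 / β) * t)) (p := β) hβ0.ne').mpr base
    refine key.congr_fun (fun x hx => ?_) measurableSet_Ioi
    have hx0 : (0:ℝ) < x := hx
    have h1 : (x ^ β) ^ ((1 - β) / β) = x ^ (1 - β) := by
      rw [← Real.rpow_mul hx0.le]
      congr 1
      field_simp
    simp only [smul_eq_mul]
    rw [h1, ← mul_assoc, ← Real.rpow_add hx0]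
    simp only [abs_of_pos hx0]
    rw [show β - 1 + (1 - β) = 0 by ring, Real.rpow_zero, one_mul, neg_mul,
      one_div, inv_mul_eq_div, neg_div]
  have hIci : IntegrableOn (fun y : ℝ => Real.exp (-|y| ^ β / β)) (Ici 0) :=
    Iff.mpr integrableOn_Ici_iff_integrableOn_Ioi hIoi
  have hIic : IntegrableOn (fun y : ℝ => Real.exp (-|y| ^ β / β)) (Iic 0) := by
    have A : MeasurableEmbedding (fun x : ℝ => -x) :=
      (Homeomorph.neg ℝ).isClosedEmbedding.measurableEmbedding
    have : volume.restrict (Iic (0:ℝ))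
        = Measure.map (fun x : ℝ => -x) (volume.restrict (Ici 0)) := by
      have h2 := A.restrict_map (μ := volume) (Iic (0:ℝ))
      rw [Measure.map_neg_eq_self] at h2
      rw [h2]
      congr 1
      ext y
      simp
    rw [IntegrableOn, this, A.integrable_map_iff]
    refine hIci.congr_fun (fun x _ => ?_) measurableSet_Ici
    simp [Function.comp]
  have : Iic (0:ℝ) ∪ Ioi 0 = univ := Iic_union_Ioi
  rw [← integrableOn_univ, ← this]
  exact hIic.union hIoi

lemma gammaInt {β : ℝ} (hβ0 : 0 < β) :
    IntegrableOn (fun s : ℝ => s ^ (1 / β - 1) * Real.exp (-s)) (Ioi 0) :=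
  (Real.GammaIntegral_convergent (by positivity : (0:ℝ) < 1 / β)).congr_fun
    (fun x _ => by rw [mul_comm]) measurableSet_Ioi

lemma substEq {β : ℝ} (hβ0 : 0 < β)
    (hF : Integrable (fun y : ℝ => Real.exp (-|y| ^ β / β))) {m : ℝ} (hm : 0 < m) :
    ∫ y in Ioi m, Real.exp (-y ^ β / β)
      = β ^ (1 / β - 1) * ∫ s in Ioi (m ^ β / β), s ^ (1 / β - 1) * Real.exp (-s) := by
  set f : ℝ → ℝ := fun y => y ^ β / β with hf_def
  set f' : ℝ → ℝ := fun y => y ^ (β - 1) with hf'_def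
  set g : ℝ → ℝ := fun s => β ^ (1 / β - 1) * (s ^ (1 / β - 1) * Real.exp (-s)) with hg_def
  have himg_pos : ∀ x : ℝ, 0 < x → 0 < f x := fun x hx => by
    simp only [hf_def]; positivity
  have hpt : ∀ x : ℝ, 0 < x → (g ∘ f) x * f' x = Real.exp (-x ^ β / β) := by
    intro x hx
    simp only [Function.comp, hf_def, hf'_def, hg_def]
    have h1 : (x ^ β / β) ^ (1 / β - 1)
        = (x ^ β) ^ (1 / β - 1) * (β⁻¹) ^ (1 / β - 1) := by
      rw [div_eq_mul_inv, Real.mul_rpow (by positivity) (by positivity)]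
    have h2 : (x ^ β) ^ (1 / β - 1) = x ^ (1 - β) := by
      rw [← Real.rpow_mul hx.le]
      congr 1
      field_simp
    have h3 : (β⁻¹ : ℝ) ^ (1 / β - 1) = (β ^ (1 / β - 1))⁻¹ := by
      rw [← Real.rpow_neg_one β, ← Real.rpow_mul hβ0.le, neg_one_mul,
        Real.rpow_neg hβ0.le]
    rw [h1, h2, h3]
    have hβr : (0:ℝ) < β ^ (1 / β - 1) := by positivity
    field_simp
    rw [← Real.rpow_add hx, show 1 - β + (β - 1) = 0 by ring,
      Real.rpow_zero]
  have key : (∫ x in Ioi m, (g ∘ f) x * f' x) = ∫ u in Ioi (f m), g u := by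
    apply integral_comp_mul_deriv_Ioi
    · exact (ContinuousOn.rpow_const continuousOn_id
        (fun x hx => Or.inl (lt_of_lt_of_le hm hx).ne')).div_const β
    · exact (tendsto_rpow_atTop hβ0).atTop_div_const hβ0
    · intro x hx
      have hx0 : (0:ℝ) < x := lt_trans hm hx
      have := ((Real.hasDerivAt_rpow_const (x := x) (p := β)
        (Or.inl hx0.ne')).div_const β)
      have h2 : β * x ^ (β - 1) / β = x ^ (β - 1) := by
        field_simp
      rw [h2] at this
      exact this.hasDerivWithinAt
    · refine ContinuousOn.mul continuousOn_const (ContinuousOn.mul ?_ ?_)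
      · refine ContinuousOn.rpow_const continuousOn_id (fun x hx => Or.inl ?_)
        obtain ⟨y, hy, rfl⟩ := hx
        exact (himg_pos y (lt_trans hm hy)).ne'
      · exact (Real.continuous_exp.comp continuous_neg).continuousOn
    · have hg0 : IntegrableOn g (Ioi 0) := (gammaInt hβ0).const_mul _
      refine hg0.mono_set ?_
      rintro _ ⟨y, hy, rfl⟩
      exact himg_pos y (lt_of_lt_of_le hm hy)
    · refine (hF.integrableOn.mono_set (subset_univ _)).congr_fun ?_ measurableSet_Ici
      intro x hx
      have hx0 : (0:ℝ) < x := lt_of_lt_of_le hm hx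
      simp only [abs_of_pos hx0]
      exact (hpt x hx0).symm
  calc ∫ y in Ioi m, Real.exp (-y ^ β / β)
      = ∫ x in Ioi m, (g ∘ f) x * f' x := by
        refine setIntegral_congr_fun measurableSet_Ioi (fun x hx => ?_)
        exact (hpt x (lt_trans hm hx)).symm
    _ = ∫ u in Ioi (f m), g u := key
    _ = β ^ (1 / β - 1) * ∫ s in Ioi (m ^ β / β), s ^ (1 / β - 1) * Real.exp (-s) := by
        rw [integral_const_mul]

lemma sup_bound {c δ s : ℝ} (hc : 0 < c) (hδ : 0 < δ) (hs : 0 < s) :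
    s ^ c * Real.exp (-(δ * s)) ≤ (c / (Real.exp 1 * δ)) ^ c := by
  have hb : (0:ℝ) < c / (Real.exp 1 * δ) := by positivity
  rw [Real.rpow_def_of_pos hs, Real.rpow_def_of_pos hb, ← Real.exp_add, Real.exp_le_exp]
  have hlog := Real.log_le_sub_one_of_pos (show (0:ℝ) < δ * s / c by positivity)
  have e1 : Real.log (δ * s / c) = Real.log δ + Real.log s - Real.log c := by
    rw [Real.log_div (by positivity) hc.ne', Real.log_mul hδ.ne' hs.ne']
  have e2 : Real.log (c / (Real.exp 1 * δ)) = Real.log c - 1 - Real.log δ := by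
    rw [Real.log_div hc.ne' (by positivity), Real.log_mul (Real.exp_pos 1).ne' hδ.ne',
      Real.log_exp]
    ring
  rw [e2]
  rw [e1] at hlog
  have hne : c ≠ 0 := hc.ne'
  calc Real.log s * c + -(δ * s)
      ≤ Real.log s * c + -(c * (δ * s / c)) := by
        rw [mul_div_assoc', mul_comm c, mul_div_assoc, div_self hne, mul_one]
    _ ≤ (Real.log c - 1 - Real.log δ) * c := by nlinarith

lemma exp_tail {a b : ℝ} (hb : 0 < b) :
    ∫ s in Ioi a, Real.exp (-(b * s)) = b⁻¹ * Real.exp (-(b * a)) := by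
  have := integral_comp_mul_left_Ioi (fun x => Real.exp (-x)) a hb
  simp only [smul_eq_mul] at this
  rw [this, integral_exp_neg_Ioi]

end Aux

/-- The generalized `β`-Gaussian probability density on `ℝ`. -/
noncomputable def phiBeta (β y : ℝ) : ℝ :=
  1 / (2 * β ^ (1 / β) * Real.Gamma (1 + 1 / β)) * Real.exp (-|y| ^ β / β)

/-- The cumulative distribution function of the `β`-Gaussian distribution. -/
noncomputable def PhiBeta (β w : ℝ) : ℝ := ∫ y in Set.Iic w, phiBeta β y

lemma Iic_to_Ioi (β w : ℝ) :
    ∫ y in Iic w, Real.exp (-|y| ^ β / β) = ∫ y in Ioi (-w), Real.exp (-|y| ^ β / β) := by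
  rw [← integral_comp_neg_Iic w (fun y => Real.exp (-|y| ^ β / β))]
  simp only [abs_neg]

lemma PhiBeta_zero {β : ℝ} (hβ0 : 0 < β) : PhiBeta β 0 = 1 / 2 := by
  have hΓ : (0:ℝ) < Real.Gamma (1 + 1 / β) := Real.Gamma_pos_of_pos (by positivity)
  have hβr : (0:ℝ) < β ^ (1 / β) := by positivity
  have h1 : ∫ y in Iic (0:ℝ), Real.exp (-|y| ^ β / β)
      = β ^ (1 / β) * Real.Gamma (1 / β + 1) := by
    rw [Iic_to_Ioi, neg_zero]
    have h2 : ∫ y in Ioi (0:ℝ), Real.exp (-|y| ^ β / β)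
        = ∫ y in Ioi (0:ℝ), Real.exp (-(1/β) * y ^ β) := by
      refine setIntegral_congr_fun measurableSet_Ioi (fun x hx => ?_)
      rw [abs_of_pos hx, neg_mul, one_div, inv_mul_eq_div, neg_div]
    rw [h2, integral_exp_neg_mul_rpow hβ0 (by positivity)]
    congr 1
    rw [one_div, Real.inv_rpow hβ0.le, neg_div, ← Real.rpow_neg hβ0.le, neg_neg, one_div]
  unfold PhiBeta phiBeta
  rw [integral_const_mul, h1, add_comm 1 (1/β)]
  field_simp

theorem stmt6 (β ε : ℝ) (hβ0 : 0 < β) (hβ1 : β < 1) (hε : 0 < ε) :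
    ∀ t w : ℝ, 0 < t → t < 1 / 2 → PhiBeta β w = t →
      Real.exp (|w| ^ β / β)
        ≤ (1 / (2 * Real.Gamma (1 / β)) ^ (1 + ε)
            * ((1 - β) / (Real.exp 1 * β * ε)) ^ ((1 - β) * (1 + ε) / β)
            * (1 + ε) ^ ((1 + ε) / β)) / t ^ (1 + ε) := by
  intro t w ht ht2 hPhi
  have h1ε : (0:ℝ) < 1 + ε := by linarith
  have hΓ1 : (0:ℝ) < Real.Gamma (1 + 1 / β) := Real.Gamma_pos_of_pos (by positivity)
  have hΓ : (0:ℝ) < Real.Gamma (1 / β) := Real.Gamma_pos_of_pos (by positivity)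
  have hβr : (0:ℝ) < β ^ (1 / β) := by positivity
  set C : ℝ := 1 / (2 * β ^ (1 / β) * Real.Gamma (1 + 1 / β)) with hC_def
  have hC : 0 < C := by rw [hC_def]; positivity
  have hF := integrableF hβ0 hβ1
  have hφ : Integrable (phiBeta β) := by
    unfold phiBeta
    exact hF.const_mul _
  have hw : w < 0 := by
    by_contra h
    push_neg at h
    have hmono : PhiBeta β 0 ≤ PhiBeta β w := by
      unfold PhiBeta
      refine setIntegral_mono_set hφ.integrableOn ?_
        (HasSubset.Subset.eventuallyLE (Iic_subset_Iic.mpr h))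
      filter_upwards with x
      unfold phiBeta
      have := Real.exp_pos (-|x| ^ β / β)
      positivity
    rw [PhiBeta_zero hβ0, hPhi] at hmono
    linarith
  set m : ℝ := -w with hm_def
  have hm : 0 < m := by rw [hm_def]; linarith
  set a : ℝ := m ^ β / β with ha_def
  have ha : 0 < a := by rw [ha_def]; positivity
  set c : ℝ := 1 / β - 1 with hc_def
  have hc : 0 < c := by
    rw [hc_def]
    have h2 : 1 < 1 / β := by rw [lt_div_iff₀ hβ0]; linarith
    linarith
  set b : ℝ := (1 + ε)⁻¹ with hb_def
  have hb : 0 < b := by rw [hb_def]; positivity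
  set δ : ℝ := ε * b with hδ_def
  have hδ : 0 < δ := by rw [hδ_def]; positivity
  have hδb : δ + b = 1 := by rw [hδ_def, hb_def]; field_simp; ring
  set K : ℝ := (c / (Real.exp 1 * δ)) ^ c with hK_def
  have hK : 0 < K := by rw [hK_def]; positivity
  -- expression of t as incomplete Gamma integral
  have ht_eq : t = C * (β ^ c * ∫ s in Ioi a, s ^ c * Real.exp (-s)) := by
    rw [← hPhi]
    unfold PhiBeta phiBeta
    rw [integral_const_mul, ← hC_def, Iic_to_Ioi, ← hm_def]
    congr 1
    rw [hc_def, ← substEq hβ0 hF hm]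
    refine setIntegral_congr_fun measurableSet_Ioi (fun x hx => ?_)
    rw [abs_of_pos (lt_trans hm hx)]
  -- bound the incomplete Gamma integral
  have hIb : (∫ s in Ioi a, s ^ c * Real.exp (-s)) ≤ K * (b⁻¹ * Real.exp (-(b * a))) := by
    have hint1 : IntegrableOn (fun s : ℝ => s ^ c * Real.exp (-s)) (Ioi a) := by
      rw [hc_def]
      exact (gammaInt hβ0).mono_set (Ioi_subset_Ioi ha.le)
    have hint2 : IntegrableOn (fun s : ℝ => K * Real.exp (-(b * s))) (Ioi a) := by
      refine Integrable.const_mul ?_ K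
      exact (exp_neg_integrableOn_Ioi a hb).congr_fun (fun x _ => by simp only [neg_mul])
        measurableSet_Ioi
    have step1 : (∫ s in Ioi a, s ^ c * Real.exp (-s))
        ≤ ∫ s in Ioi a, K * Real.exp (-(b * s)) := by
      refine setIntegral_mono_on hint1 hint2 measurableSet_Ioi (fun s hs => ?_)
      have hs0 : (0:ℝ) < s := lt_trans ha hs
      have hsplit : Real.exp (-s) = Real.exp (-(δ * s)) * Real.exp (-(b * s)) := by
        rw [← Real.exp_add]
        congr 1
        have : -(δ * s) + -(b * s) = -((δ + b) * s) := by ring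
        rw [this, hδb, one_mul]
      calc s ^ c * Real.exp (-s)
          = (s ^ c * Real.exp (-(δ * s))) * Real.exp (-(b * s)) := by rw [hsplit]; ring
        _ ≤ K * Real.exp (-(b * s)) := by
            rw [hK_def]
            exact mul_le_mul_of_nonneg_right (sup_bound hc hδ hs0) (Real.exp_pos _).le
    rwa [integral_const_mul, exp_tail hb] at step1
  -- bound on t
  have htb : t ≤ (C * β ^ c * K * b⁻¹) * Real.exp (-(b * a)) := by
    rw [ht_eq]
    calc C * (β ^ c * ∫ s in Ioi a, s ^ c * Real.exp (-s))
        ≤ C * (β ^ c * (K * (b⁻¹ * Real.exp (-(b * a))))) := by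
          refine mul_le_mul_of_nonneg_left ?_ hC.le
          exact mul_le_mul_of_nonneg_left hIb (by positivity)
      _ = (C * β ^ c * K * b⁻¹) * Real.exp (-(b * a)) := by ring
  set M : ℝ := C * β ^ c * K * b⁻¹ with hM_def
  have hM : 0 < M := by
    rw [hM_def]
    have : (0:ℝ) < β ^ c := by positivity
    positivity
  have htp : t ^ (1 + ε) ≤ M ^ (1 + ε) * Real.exp (-a) := by
    have h1 : t ^ (1 + ε) ≤ (M * Real.exp (-(b * a))) ^ (1 + ε) :=
      Real.rpow_le_rpow ht.le htb h1ε.le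
    rw [Real.mul_rpow hM.le (Real.exp_pos _).le, ← Real.exp_mul] at h1
    have h2 : -(b * a) * (1 + ε) = -a := by rw [hb_def]; field_simp
    rwa [h2] at h1
  have hgoal : Real.exp a * t ^ (1 + ε) ≤ M ^ (1 + ε) := by
    calc Real.exp a * t ^ (1 + ε)
        ≤ Real.exp a * (M ^ (1 + ε) * Real.exp (-a)) :=
          mul_le_mul_of_nonneg_left htp (Real.exp_pos _).le
      _ = M ^ (1 + ε) * (Real.exp a * Real.exp (-a)) := by ring
      _ = M ^ (1 + ε) := by rw [← Real.exp_add, add_neg_cancel, Real.exp_zero, mul_one]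
  -- identify the constant
  have hΓadd : Real.Gamma (1 + 1 / β) = (1 / β) * Real.Gamma (1 / β) := by
    rw [add_comm, Real.Gamma_add_one (by positivity : (0:ℝ) < 1 / β).ne']
  have hβsub : β ^ c = β ^ (1 / β) / β := by rw [hc_def, Real.rpow_sub hβ0, Real.rpow_one]
  have hM_eq : M = K * (1 + ε) / (2 * Real.Gamma (1 / β)) := by
    rw [hM_def, hC_def, hΓadd, hβsub, hb_def, inv_inv]
    field_simp
    all_goals first
    | ring1
    | exact Or.inl (by ring)
    | simp
  have hA : (0:ℝ) < (1 - β) / (Real.exp 1 * β * ε) :=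
    div_pos (by linarith) (by positivity)
  have hbase : c / (Real.exp 1 * δ) = ((1 - β) / (Real.exp 1 * β * ε)) * (1 + ε) := by
    rw [hc_def, hδ_def, hb_def]
    field_simp
    all_goals first
    | ring1
    | exact Or.inl (by ring)
    | simp
  have hbase_pos : (0:ℝ) < c / (Real.exp 1 * δ) := by positivity
  have hKpow : K ^ (1 + ε)
      = ((1 - β) / (Real.exp 1 * β * ε)) ^ ((1 - β) * (1 + ε) / β)
        * (1 + ε) ^ ((1 - β) * (1 + ε) / β) := by
    rw [hK_def, ← Real.rpow_mul hbase_pos.le, hbase,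
      Real.mul_rpow hA.le h1ε.le]
    have hce : c * (1 + ε) = (1 - β) * (1 + ε) / β := by
      rw [hc_def]; field_simp
    rw [hce]
  have hpowsum : (1 + ε) ^ ((1 - β) * (1 + ε) / β) * (1 + ε) ^ (1 + ε)
      = (1 + ε) ^ ((1 + ε) / β) := by
    rw [← Real.rpow_add h1ε]
    congr 1
    field_simp
    ring
  have hconst : M ^ (1 + ε)
      = 1 / (2 * Real.Gamma (1 / β)) ^ (1 + ε)
          * ((1 - β) / (Real.exp 1 * β * ε)) ^ ((1 - β) * (1 + ε) / β)
          * (1 + ε) ^ ((1 + ε) / β) := by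
    rw [hM_eq, Real.div_rpow (by positivity) (by positivity),
      Real.mul_rpow hK.le h1ε.le, hKpow, mul_assoc, mul_assoc, hpowsum]
    ring
  have habs : |w| = m := by rw [abs_of_neg hw, hm_def]
  rw [habs, ← ha_def, le_div_iff₀ (Real.rpow_pos_of_pos ht _), ← hconst]
  exact hgoal
end

section
/- Let $0<\tau<\beta$, $\alpha\ge0$ with $\tau q\alpha<\tfrac12$ for some $q>0$, and let $\varphi_\beta(y)=\frac{1}{2\beta^{1/\beta}\Gamma(1+1/\beta)}e^{-|y|^{\beta}/\beta}$. Then $\int_{\mathbb R}\exp\big(q\alpha|y|^{\tau}\big)\,\varphi_\beta(y)\,dy\le \exp\Big(\big(1+\tfrac{\tau}{\beta}\big)q\alpha\Big)$. -/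
open MeasureTheory Real Set

lemma integrableOn_exp_neg_mul_rpow' {p b : ℝ} (hp : 0 < p) (hb : 0 < b) :
    IntegrableOn (fun x : ℝ => Real.exp (-b * x ^ p)) (Ioi 0) := by
  rw [← integrableOn_Ioi_comp_rpow_iff' (fun x : ℝ => Real.exp (-b * x ^ p))
    (p := 1 / p) (one_div_ne_zero hp.ne')]
  have h1 : IntegrableOn (fun x : ℝ => x ^ (1 / p - 1) * Real.exp (-b * x)) (Ioi 0) := by
    have := integrableOn_rpow_mul_exp_neg_mul_rpow (p := 1) (s := 1 / p - 1) (b := b)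
      (by simpa using one_div_pos.mpr hp) zero_lt_one hb
    simpa [Real.rpow_one] using this
  refine h1.congr_fun (fun x hx => ?_) measurableSet_Ioi
  have hx0 : (0:ℝ) < x := hx
  rw [smul_eq_mul, ← Real.rpow_mul hx0.le, one_div_mul_cancel hp.ne', Real.rpow_one]

lemma integrable_comp_abs' {f : ℝ → ℝ} (hf : IntegrableOn f (Ioi 0)) :
    Integrable (fun x : ℝ => f |x|) := by
  have hIoi : IntegrableOn (fun x : ℝ => f |x|) (Ioi 0) := by
    refine hf.congr_fun (fun x hx => ?_) measurableSet_Ioi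
    rw [abs_of_pos hx]
  have hIic : IntegrableOn (fun x : ℝ => f |x|) (Iic 0) := by
    rw [← Measure.map_neg_eq_self (volume : Measure ℝ)]
    have m : MeasurableEmbedding fun x : ℝ => -x := (Homeomorph.neg ℝ).measurableEmbedding
    rw [m.integrableOn_map_iff]
    simp_rw [Function.comp_def, abs_neg, neg_preimage, neg_Iic, neg_zero]
    exact Iff.mpr integrableOn_Ici_iff_integrableOn_Ioi hIoi
  have := hIic.union hIoi
  rwa [Iic_union_Ioi, integrableOn_univ] at this

theorem stmt10 (β τ α q : ℝ) (hτ : 0 < τ) (hτβ : τ < β) (hα : 0 ≤ α)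
    (hq : 0 < q) (hsmall : τ * q * α < 1 / 2) :
    ∫ y : ℝ, Real.exp (q * α * |y| ^ τ) * phiBeta β y
      ≤ Real.exp ((1 + τ / β) * q * α) := by
  have hβ : 0 < β := hτ.trans hτβ
  set x := τ * q * α with hxdef
  have hx0 : 0 ≤ x := by positivity
  have h1x : 0 < 1 - x := by linarith
  have hG : 0 < Real.Gamma (1 + 1 / β) := Real.Gamma_pos_of_pos (by positivity)
  set K := 1 / (2 * β ^ (1 / β) * Real.Gamma (1 + 1 / β)) with hK
  have hK0 : 0 < K := by
    rw [hK]
    exact one_div_pos.mpr (mul_pos (mul_pos two_pos (Real.rpow_pos_of_pos hβ _)) hG)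
  set c := (1 - x) / β with hc
  have hc0 : 0 < c := div_pos h1x hβ
  set A := (1 - τ / β) * (q * α) with hA
  have hphi : ∀ y : ℝ, phiBeta β y = K * Real.exp (-|y| ^ β / β) := fun y => rfl
  -- pointwise bound
  have hpt : ∀ y : ℝ, Real.exp (q * α * |y| ^ τ) * phiBeta β y
      ≤ Real.exp A * (K * Real.exp (-c * |y| ^ β)) := by
    intro y
    rw [hphi y]
    have hY : |y| ^ τ ≤ τ / β * |y| ^ β + (1 - τ / β) := by
      have := Real.geom_mean_le_arith_mean2_weighted
        (w₁ := τ / β) (w₂ := 1 - τ / β) (p₁ := |y| ^ β) (p₂ := 1)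
        (by positivity) (by rw [sub_nonneg]; exact (div_le_one hβ).mpr hτβ.le)
        (by positivity) zero_le_one (by ring)
      rwa [Real.one_rpow, mul_one, mul_one, ← Real.rpow_mul (abs_nonneg y),
        mul_div_cancel₀ _ hβ.ne'] at this
    have key : q * α * |y| ^ τ ≤ q * α * (τ / β * |y| ^ β + (1 - τ / β)) :=
      mul_le_mul_of_nonneg_left hY (by positivity)
    have hexp : q * α * |y| ^ τ + -|y| ^ β / β ≤ A + -c * |y| ^ β := by
      have hid : A + -c * |y| ^ β
          = q * α * (τ / β * |y| ^ β + (1 - τ / β)) + -|y| ^ β / β := by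
        rw [hA, hc, hxdef]; field_simp; ring
      rw [hid]; linarith
    calc Real.exp (q * α * |y| ^ τ) * (K * Real.exp (-|y| ^ β / β))
        = K * Real.exp (q * α * |y| ^ τ + -|y| ^ β / β) := by
          rw [Real.exp_add]; ring
      _ ≤ K * Real.exp (A + -c * |y| ^ β) := by
          exact mul_le_mul_of_nonneg_left (Real.exp_le_exp.mpr hexp) hK0.le
      _ = Real.exp A * (K * Real.exp (-c * |y| ^ β)) := by
          rw [Real.exp_add]; ring
  have hint0 : Integrable (fun y : ℝ => Real.exp (-c * |y| ^ β)) :=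
    integrable_comp_abs' (f := fun t => Real.exp (-c * t ^ β))
      (integrableOn_exp_neg_mul_rpow' hβ hc0)
  have hint : Integrable (fun y : ℝ => Real.exp A * (K * Real.exp (-c * |y| ^ β))) :=
    (hint0.const_mul K).const_mul (Real.exp A)
  have hmono : (∫ y : ℝ, Real.exp (q * α * |y| ^ τ) * phiBeta β y)
      ≤ ∫ y : ℝ, Real.exp A * (K * Real.exp (-c * |y| ^ β)) := by
    refine integral_mono_of_nonneg (Filter.Eventually.of_forall fun y => ?_) hint
      (Filter.Eventually.of_forall hpt)
    simp only [Pi.zero_apply]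
    rw [hphi y]
    exact mul_nonneg (Real.exp_nonneg _) (mul_nonneg hK0.le (Real.exp_nonneg _))
  have h2 : (∫ y : ℝ, Real.exp (-c * |y| ^ β))
      = 2 * ∫ y in Ioi (0:ℝ), Real.exp (-c * y ^ β) :=
    integral_comp_abs (f := fun t => Real.exp (-c * t ^ β))
  have h3 : (∫ y in Ioi (0:ℝ), Real.exp (-c * y ^ β))
      = c ^ (-1 / β) * Real.Gamma (1 / β + 1) := integral_exp_neg_mul_rpow hβ hc0
  have hval : K * (2 * (c ^ (-1 / β) * Real.Gamma (1 / β + 1))) = (1 - x) ^ (-1 / β) := by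
    have h1xe : (1 - x) = c * β := by rw [hc]; field_simp
    have hsplit : (1 - x) ^ (-1 / β) = c ^ (-1 / β) * β ^ (-1 / β) := by
      rw [h1xe, Real.mul_rpow hc0.le hβ.le]
    rw [hsplit, hK, add_comm (1 / β) 1, neg_div, Real.rpow_neg hβ.le]
    have hb0 : β ^ (1 / β) ≠ 0 := (Real.rpow_pos_of_pos hβ _).ne'
    field_simp
  have hfin : Real.exp A * (1 - x) ^ (-1 / β) ≤ Real.exp ((1 + τ / β) * q * α) := by
    have hlog : -(2 * x) ≤ Real.log (1 - x) := by
      rw [Real.le_log_iff_exp_le h1x]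
      have e1 : Real.exp (-(2 * x)) = (Real.exp (2 * x))⁻¹ := by
        rw [Real.exp_neg]
      have e2 : (Real.exp (2 * x))⁻¹ ≤ (1 + 2 * x)⁻¹ := by
        apply inv_anti₀ (by linarith)
        linarith [Real.add_one_le_exp (2 * x)]
      have e3 : (1 + 2 * x)⁻¹ ≤ 1 - x := by
        rw [inv_le_iff_one_le_mul₀ (by linarith)]
        nlinarith
      rw [e1]; linarith
    rw [Real.rpow_def_of_pos h1x, ← Real.exp_add, Real.exp_le_exp]
    have hb : 0 < 1 / β := by positivity
    have step : Real.log (1 - x) * (-1 / β) ≤ 2 * x * (1 / β) := by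
      calc Real.log (1 - x) * (-1 / β) = -Real.log (1 - x) * (1 / β) := by ring
        _ ≤ 2 * x * (1 / β) := mul_le_mul_of_nonneg_right (by linarith) hb.le
    have hid2 : A + 2 * x * (1 / β) = (1 + τ / β) * q * α := by
      rw [hA, hxdef]; field_simp; ring
    linarith
  calc (∫ y : ℝ, Real.exp (q * α * |y| ^ τ) * phiBeta β y)
      ≤ ∫ y : ℝ, Real.exp A * (K * Real.exp (-c * |y| ^ β)) := hmono
    _ = Real.exp A * (K * (2 * (c ^ (-1 / β) * Real.Gamma (1 / β + 1)))) := by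
        rw [integral_const_mul, integral_const_mul, h2, h3]
    _ = Real.exp A * (1 - x) ^ (-1 / β) := by rw [hval]
    _ ≤ Real.exp ((1 + τ / β) * q * α) := hfin
end

section
/- Let $0<\tau<\beta$, let $(\alpha_j)_{j\ge1}\in\ell^1(\mathbb N)$ with $\alpha_j\ge0$, let $\mu_\beta=\bigotimes_{j\ge1}\mathcal N_\beta(0,1)$ be the countable product of $\beta$-Gaussian measures, and set $a_{\min}(y)=c\exp\big(-\sum_{j\ge1}\alpha_j|y_j|^{\tau}\big)$ for $c>0$. Then for every $q\in(0,\infty)$, the function $1/a_{\min}$ lies in $L^q_{\mu_\beta}$, i.e., $\int \exp\big(q\sum_{j\ge1}\alpha_j|y_j|^{\tau}\big)\,\mu_\beta(dy)<\infty$. -/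
open MeasureTheory

/-- The `β`-Gaussian measure `𝒩_β(0,1)` on `ℝ`. -/
noncomputable def gaussBeta (β : ℝ) : Measure ℝ :=
  volume.withDensity fun y => ENNReal.ofReal (phiBeta β y)

/-- `μ` is the countable product `⨂_{j≥1} 𝒩_β(0,1)` on `ℝ^ℕ`: it is a probability
measure whose finite-dimensional cylinder probabilities factor as products of
one-dimensional `β`-Gaussian measures. -/
def IsProductBetaGaussian (β : ℝ) (μ : Measure (ℕ → ℝ)) : Prop :=
  IsProbabilityMeasure μ ∧
    ∀ (s : Finset ℕ) (A : ℕ → Set ℝ), (∀ i, MeasurableSet (A i)) →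
      μ {y : ℕ → ℝ | ∀ i ∈ s, y i ∈ A i} = ∏ i ∈ s, gaussBeta β (A i)

open Real Set
open scoped ENNReal


lemma aux_integrable_G {β : ℝ} (hβ : 0 < β) :
    Integrable (fun t : ℝ => (1 + |t| ^ β) * Real.exp (-|t| ^ β / (2 * β))) := by
  have h2β : (0:ℝ) < 2 * β := by linarith
  set f : ℝ → ℝ := fun u => u ^ (1/β - 1) * ((1 + u) * Real.exp (-(1/(2*β)) * u)) with hf
  have hfint : IntegrableOn f (Ioi 0) := by
    have h1 : IntegrableOn (fun u : ℝ => u ^ (1/β - 1) * Real.exp (-(1/(2*β)) * u ^ (1:ℝ)))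
        (Ioi 0) := integrableOn_rpow_mul_exp_neg_mul_rpow (by
          have : (0:ℝ) < 1/β := by positivity
          linarith) one_pos (by positivity)
    have h2 : IntegrableOn (fun u : ℝ => u ^ (1/β - 1 + 1) * Real.exp (-(1/(2*β)) * u ^ (1:ℝ)))
        (Ioi 0) := integrableOn_rpow_mul_exp_neg_mul_rpow (by
          have : (0:ℝ) < 1/β := by positivity
          linarith) one_pos (by positivity)
    refine (IntegrableOn.congr_fun (h1.add h2) (fun u hu => ?_) measurableSet_Ioi)
    have hu : (0:ℝ) < u := hu
    simp only [hf, Pi.add_apply, Real.rpow_one]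
    rw [Real.rpow_add hu, Real.rpow_one]
    ring
  have key : IntegrableOn (fun x : ℝ => (1 + x ^ β) * Real.exp (-x ^ β / (2 * β))) (Ioi 0) := by
    have h := (integrableOn_Ioi_comp_rpow_iff' f hβ.ne').mpr hfint
    refine h.congr_fun (fun x hx => ?_) measurableSet_Ioi
    have hx : (0:ℝ) < x := hx
    have hxβ : (0:ℝ) < x ^ β := rpow_pos_of_pos hx β
    simp only [hf, smul_eq_mul]
    rw [← Real.rpow_mul hx.le, ← mul_assoc, ← Real.rpow_add hx]
    have he : β - 1 + β * (1/β - 1) = 0 := by field_simp; ring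
    rw [he, Real.rpow_zero, one_mul]
    congr 1
    ring
  rw [← integrableOn_univ, ← @Iio_union_Ici _ _ (0 : ℝ), integrableOn_union,
    integrableOn_Ici_iff_integrableOn_Ioi]
  constructor
  · rw [← (Measure.measurePreserving_neg (volume : Measure ℝ)).integrableOn_comp_preimage
      (Homeomorph.neg ℝ).measurableEmbedding]
    simp only [Function.comp_def, abs_neg, neg_preimage, neg_Iio, neg_neg, neg_zero]
    refine key.congr_fun (fun x hx => ?_) measurableSet_Ioi
    rw [abs_of_pos hx]
  · refine key.congr_fun (fun x hx => ?_) measurableSet_Ioi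
    rw [abs_of_pos hx]

lemma aux_exp_le {x : ℝ} (hx : 0 ≤ x) : Real.exp x ≤ 1 + x * Real.exp x := by
  have h := Real.add_one_le_exp (-x)
  have h2 : Real.exp (-x) = (Real.exp x)⁻¹ := Real.exp_neg x
  have h3 : (0:ℝ) < Real.exp x := Real.exp_pos x
  rw [h2] at h
  have h4 := mul_le_mul_of_nonneg_right h h3.le
  rw [inv_mul_cancel₀ h3.ne'] at h4
  nlinarith

lemma aux_rpow_le {τ β : ℝ} (hτ : 0 < τ) (hτβ : τ < β) (t : ℝ) :
    |t| ^ τ ≤ 1 + |t| ^ β := by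
  rcases le_or_gt |t| 1 with h | h
  · have : |t| ^ τ ≤ 1 := Real.rpow_le_one (abs_nonneg t) h hτ.le
    have h2 : (0:ℝ) ≤ |t| ^ β := Real.rpow_nonneg (abs_nonneg t) β
    linarith
  · have : |t| ^ τ ≤ |t| ^ β := Real.rpow_le_rpow_of_exponent_le h.le (by linarith)
    linarith

lemma aux_split {τ β : ℝ} (hτ : 0 < τ) (hτβ : τ < β) {D : ℝ} (hD : 0 ≤ D) (t : ℝ) :
    D * |t| ^ τ ≤ D * ((2*β*D) ^ ((β-τ)⁻¹)) ^ τ + |t| ^ β / (2*β) := by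
  have hβ : 0 < β := hτ.trans hτβ
  have h2β : (0:ℝ) < 2 * β := by linarith
  set T : ℝ := (2*β*D) ^ ((β-τ)⁻¹) with hT
  have hT0 : 0 ≤ T := Real.rpow_nonneg (by positivity) _
  have hβτ : (0:ℝ) < β - τ := by linarith
  rcases le_or_gt |t| T with h | h
  · have h1 : |t| ^ τ ≤ T ^ τ := Real.rpow_le_rpow (abs_nonneg t) h hτ.le
    have h2 : (0:ℝ) ≤ |t| ^ β / (2*β) := by positivity
    nlinarith [mul_le_mul_of_nonneg_left h1 hD]
  · have ht0 : 0 < |t| := lt_of_le_of_lt hT0 h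
    have hTβτ : T ^ (β - τ) = 2*β*D := by
      rw [hT, ← Real.rpow_mul (by positivity), inv_mul_cancel₀ hβτ.ne', Real.rpow_one]
    have h1 : (2:ℝ)*β*D ≤ |t| ^ (β - τ) := by
      rw [← hTβτ]
      exact Real.rpow_le_rpow hT0 h.le hβτ.le
    have h2 : |t| ^ β = |t| ^ τ * |t| ^ (β - τ) := by
      rw [← Real.rpow_add ht0]; ring_nf
    have h3 : (0:ℝ) ≤ |t| ^ τ := Real.rpow_nonneg (abs_nonneg t) τ
    have h4 : 0 ≤ D * (T ^ τ) := by positivity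
    have h5 : D * |t| ^ τ ≤ |t| ^ β / (2*β) := by
      rw [h2, le_div_iff₀ h2β]
      calc D * |t| ^ τ * (2*β) = |t| ^ τ * (2*β*D) := by ring
      _ ≤ |t| ^ τ * |t| ^ (β - τ) := mul_le_mul_of_nonneg_left h1 h3
    linarith

lemma aux_pointwise {τ β D a : ℝ} (hτ : 0 < τ) (hτβ : τ < β) (ha : 0 ≤ a) (haD : a ≤ D)
    (t : ℝ) :
    Real.exp (a * |t| ^ τ) ≤
      1 + a * (Real.exp (D * ((2*β*D) ^ ((β-τ)⁻¹)) ^ τ) *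
        ((1 + |t| ^ β) * Real.exp (|t| ^ β / (2*β)))) := by
  have hD : 0 ≤ D := ha.trans haD
  have htτ : (0:ℝ) ≤ |t| ^ τ := Real.rpow_nonneg (abs_nonneg t) τ
  have htβ : (0:ℝ) ≤ |t| ^ β := Real.rpow_nonneg (abs_nonneg t) β
  have hx : 0 ≤ a * |t| ^ τ := mul_nonneg ha htτ
  refine (aux_exp_le hx).trans ?_
  have h1 : a * |t| ^ τ * Real.exp (a * |t| ^ τ) ≤
      a * ((1 + |t| ^ β) * Real.exp (D * |t| ^ τ)) := by
    have e1 : Real.exp (a * |t| ^ τ) ≤ Real.exp (D * |t| ^ τ) :=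
      Real.exp_le_exp.mpr (mul_le_mul_of_nonneg_right haD htτ)
    have e2 : |t| ^ τ ≤ 1 + |t| ^ β := aux_rpow_le hτ hτβ t
    have e3 : |t| ^ τ * Real.exp (a * |t| ^ τ) ≤ (1 + |t| ^ β) * Real.exp (D * |t| ^ τ) :=
      mul_le_mul e2 e1 (Real.exp_pos _).le (by linarith)
    calc a * |t| ^ τ * Real.exp (a * |t| ^ τ) = a * (|t| ^ τ * Real.exp (a * |t| ^ τ)) := by ring
    _ ≤ a * ((1 + |t| ^ β) * Real.exp (D * |t| ^ τ)) := mul_le_mul_of_nonneg_left e3 ha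
  have h2 : Real.exp (D * |t| ^ τ) ≤
      Real.exp (D * ((2*β*D) ^ ((β-τ)⁻¹)) ^ τ) * Real.exp (|t| ^ β / (2*β)) := by
    rw [← Real.exp_add]
    exact Real.exp_le_exp.mpr (aux_split hτ hτβ hD t)
  have h3 : (1 + |t| ^ β) * Real.exp (D * |t| ^ τ) ≤
      Real.exp (D * ((2*β*D) ^ ((β-τ)⁻¹)) ^ τ) * ((1 + |t| ^ β) * Real.exp (|t| ^ β / (2*β))) := by
    calc (1 + |t| ^ β) * Real.exp (D * |t| ^ τ)
        ≤ (1 + |t| ^ β) * (Real.exp (D * ((2*β*D) ^ ((β-τ)⁻¹)) ^ τ) * Real.exp (|t| ^ β / (2*β))) :=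
          mul_le_mul_of_nonneg_left h2 (by linarith)
      _ = _ := by ring
  have h4 := mul_le_mul_of_nonneg_left h3 ha
  linarith
lemma phiBeta_meas (β : ℝ) : Measurable (phiBeta β) := by
  unfold phiBeta
  exact (measurable_const.mul ((measurable_abs.pow_const β).neg.div_const β).exp)

lemma Zconst_pos {β : ℝ} (hβ : 0 < β) : 0 < 1 / (2 * β ^ (1 / β) * Real.Gamma (1 + 1 / β)) := by
  have h1 : 0 < β ^ (1/β : ℝ) := Real.rpow_pos_of_pos hβ _
  have h2 : 0 < Real.Gamma (1 + 1/β) := Real.Gamma_pos_of_pos (by positivity)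
  positivity

lemma gauss_lintegral {β : ℝ} {h : ℝ → ℝ≥0∞} (hh : Measurable h) :
    ∫⁻ t, h t ∂(gaussBeta β) = ∫⁻ t, h t * ENNReal.ofReal (phiBeta β t) := by
  unfold gaussBeta
  rw [lintegral_withDensity_eq_lintegral_mul _ ((phiBeta_meas β).ennreal_ofReal) hh]
  simp only [Pi.mul_apply, mul_comm]

lemma gauss_L_lt_top {β : ℝ} (hβ : 0 < β) :
    ∫⁻ t, ENNReal.ofReal ((1 + |t| ^ β) * Real.exp (|t| ^ β / (2*β))) ∂(gaussBeta β) < ⊤ := by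
  have hmeas : Measurable fun t : ℝ => ENNReal.ofReal ((1 + |t| ^ β) * Real.exp (|t| ^ β / (2*β))) := by
    exact ((measurable_const.add (measurable_abs.pow_const β)).mul
      ((measurable_abs.pow_const β).div_const _).exp).ennreal_ofReal
  rw [gauss_lintegral hmeas]
  have hZ := Zconst_pos hβ
  set Z : ℝ := 1 / (2 * β ^ (1 / β) * Real.Gamma (1 + 1 / β)) with hZdef
  have hpt : ∀ t : ℝ, ENNReal.ofReal ((1 + |t| ^ β) * Real.exp (|t| ^ β / (2*β))) *
      ENNReal.ofReal (phiBeta β t) =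
      ENNReal.ofReal Z * ENNReal.ofReal ((1 + |t| ^ β) * Real.exp (-|t| ^ β / (2*β))) := by
    intro t
    have h1 : (0:ℝ) ≤ (1 + |t| ^ β) * Real.exp (|t| ^ β / (2*β)) := by positivity
    rw [← ENNReal.ofReal_mul h1, ← ENNReal.ofReal_mul hZ.le]
    congr 1
    unfold phiBeta
    rw [← hZdef]
    rw [show -|t| ^ β / (2*β) = |t| ^ β / (2*β) + -|t| ^ β / β by field_simp; ring,
      Real.exp_add]
    ring
  simp_rw [hpt]
  rw [lintegral_const_mul' _ _ ENNReal.ofReal_ne_top]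
  have hint : Integrable (fun t : ℝ => (1 + |t| ^ β) * Real.exp (-|t| ^ β / (2 * β))) :=
    aux_integrable_G hβ
  exact ENNReal.mul_lt_top ENNReal.ofReal_lt_top hint.lintegral_lt_top

lemma gauss_I_le {τ β D a : ℝ} (hτ : 0 < τ) (hτβ : τ < β) (ha : 0 ≤ a) (haD : a ≤ D)
    (hguniv : (gaussBeta β) Set.univ = 1) :
    ∫⁻ t, ENNReal.ofReal (Real.exp (a * |t| ^ τ)) ∂(gaussBeta β) ≤
      1 + ENNReal.ofReal a * (ENNReal.ofReal (Real.exp (D * ((2*β*D) ^ ((β-τ)⁻¹)) ^ τ)) *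
        ∫⁻ t, ENNReal.ofReal ((1 + |t| ^ β) * Real.exp (|t| ^ β / (2*β))) ∂(gaussBeta β)) := by
  set M : ℝ := D * ((2*β*D) ^ ((β-τ)⁻¹)) ^ τ with hM
  have hstep : ∀ t : ℝ, ENNReal.ofReal (Real.exp (a * |t| ^ τ)) ≤
      1 + ENNReal.ofReal a * (ENNReal.ofReal (Real.exp M) *
        ENNReal.ofReal ((1 + |t| ^ β) * Real.exp (|t| ^ β / (2*β)))) := by
    intro t
    have hpt := aux_pointwise (D := D) hτ hτβ ha haD t
    calc ENNReal.ofReal (Real.exp (a * |t| ^ τ))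
        ≤ ENNReal.ofReal (1 + a * (Real.exp M * ((1 + |t| ^ β) * Real.exp (|t| ^ β / (2*β))))) :=
          ENNReal.ofReal_le_ofReal hpt
      _ = 1 + ENNReal.ofReal a * (ENNReal.ofReal (Real.exp M) *
          ENNReal.ofReal ((1 + |t| ^ β) * Real.exp (|t| ^ β / (2*β)))) := by
          rw [ENNReal.ofReal_add (by norm_num) (by positivity), ENNReal.ofReal_one,
            ENNReal.ofReal_mul ha, ENNReal.ofReal_mul (Real.exp_pos _).le]
  calc ∫⁻ t, ENNReal.ofReal (Real.exp (a * |t| ^ τ)) ∂(gaussBeta β)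
      ≤ ∫⁻ t, (1 + ENNReal.ofReal a * (ENNReal.ofReal (Real.exp M) *
          ENNReal.ofReal ((1 + |t| ^ β) * Real.exp (|t| ^ β / (2*β))))) ∂(gaussBeta β) :=
        lintegral_mono hstep
    _ = (gaussBeta β) Set.univ + ENNReal.ofReal a * (ENNReal.ofReal (Real.exp M) *
          ∫⁻ t, ENNReal.ofReal ((1 + |t| ^ β) * Real.exp (|t| ^ β / (2*β))) ∂(gaussBeta β)) := by
        rw [lintegral_add_left measurable_const, lintegral_one]
        congr 1
        rw [← lintegral_const_mul' _ _ ENNReal.ofReal_ne_top,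
          ← lintegral_const_mul' _ _ ENNReal.ofReal_ne_top]
    _ = _ := by rw [hguniv]

theorem stmt11 (β τ c q : ℝ) (α : ℕ → ℝ)
    (hτ : 0 < τ) (hτβ : τ < β) (hα : ∀ j, 0 ≤ α j) (hsum : Summable α)
    (hc : 0 < c) (hq : 0 < q)
    (μ : Measure (ℕ → ℝ)) (hμ : IsProductBetaGaussian β μ) :
    ∫⁻ y in {y : ℕ → ℝ | Summable fun j => α j * |y j| ^ τ},
        ENNReal.ofReal ((c * Real.exp (-∑' j, α j * |y j| ^ τ))⁻¹ ^ q) ∂μ < ⊤ := by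
  classical
  obtain ⟨hprob, hcyl⟩ := hμ
  have hβ : 0 < β := hτ.trans hτβ
  -- gaussBeta is a probability measure
  have hguniv : (gaussBeta β) Set.univ = 1 := by
    have h := hcyl {0} (fun _ => Set.univ) (fun _ => MeasurableSet.univ)
    simpa using h.symm
  -- single coordinate marginals
  have hmap : ∀ (j : ℕ) (A : Set ℝ), MeasurableSet A →
      μ ((fun y : ℕ → ℝ => y j) ⁻¹' A) = gaussBeta β A := by
    intro j A hA
    have h := hcyl {j} (fun _ => A) (fun _ => hA)
    simpa [Set.preimage] using h
  -- independence of coordinates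
  have hind : ProbabilityTheory.iIndepFun
      (fun j (y : ℕ → ℝ) => y j) μ := by
    rw [ProbabilityTheory.iIndepFun_iff_measure_inter_preimage_eq_mul]
    intro S sets hsets
    set A : ℕ → Set ℝ := fun i => if i ∈ S then sets i else Set.univ with hA
    have hAm : ∀ i, MeasurableSet (A i) := by
      intro i
      by_cases h : i ∈ S
      · simpa [hA, h] using hsets i h
      · simp [hA, h]
    have h := hcyl S A hAm
    have hset : {y : ℕ → ℝ | ∀ i ∈ S, y i ∈ A i} = ⋂ i ∈ S, (fun y : ℕ → ℝ => y i) ⁻¹' sets i := by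
      ext y
      simp only [Set.mem_setOf_eq, Set.mem_iInter, Set.mem_preimage]
      refine ⟨fun hy i hi => by simpa [hA, hi] using hy i hi,
        fun hy i hi => by simpa [hA, hi] using hy i hi⟩
    rw [hset] at h
    rw [h]
    refine Finset.prod_congr rfl fun i hi => ?_
    rw [hmap i _ (hsets i hi)]
    simp [hA, hi]
  -- the one-dimensional integrand
  set g : ℕ → ℝ → ℝ≥0∞ := fun j t => ENNReal.ofReal (Real.exp (q * α j * |t| ^ τ)) with hgdef
  have hgmeas : ∀ j, Measurable (g j) := fun j =>
    (((measurable_abs.pow_const τ).const_mul _).exp).ennreal_ofReal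
  set X : ℕ → (ℕ → ℝ) → ℝ≥0∞ := fun j y => g j (y j) with hXdef
  have hXmeas : ∀ j, Measurable (X j) := fun j => (hgmeas j).comp (measurable_pi_apply j)
  have hindX : ProbabilityTheory.iIndepFun
      X μ := hind.comp g hgmeas
  -- value of the one-dimensional integrals
  have hXint : ∀ j, ∫⁻ y, X j y ∂μ = ∫⁻ t, g j t ∂(gaussBeta β) := by
    intro j
    have hmapμ : μ.map (fun y : ℕ → ℝ => y j) = gaussBeta β := by
      refine Measure.ext fun A hA => ?_
      rw [Measure.map_apply (measurable_pi_apply j) hA, hmap j A hA]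
    rw [← hmapμ, lintegral_map (hgmeas j) (measurable_pi_apply j)]
  -- uniform bound on the one-dimensional integrals
  set D : ℝ := q * ∑' j, α j with hDdef
  have htsum0 : 0 ≤ ∑' j, α j := tsum_nonneg hα
  have hD0 : 0 ≤ D := by positivity
  set M : ℝ := D * ((2*β*D) ^ ((β-τ)⁻¹)) ^ τ with hMdef
  set L : ℝ≥0∞ := ∫⁻ t, ENNReal.ofReal ((1 + |t| ^ β) * Real.exp (|t| ^ β / (2*β)))
      ∂(gaussBeta β) with hLdef
  have hLtop : L ≠ ⊤ := (gauss_L_lt_top hβ).ne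
  set K : ℝ≥0∞ := ENNReal.ofReal (Real.exp M) * L with hKdef
  have hKtop : K ≠ ⊤ := ENNReal.mul_ne_top ENNReal.ofReal_ne_top hLtop
  set K' : ℝ := K.toReal with hK'def
  have hK'0 : 0 ≤ K' := ENNReal.toReal_nonneg
  have hKK' : K = ENNReal.ofReal K' := (ENNReal.ofReal_toReal hKtop).symm
  have hIj : ∀ j, ∫⁻ t, g j t ∂(gaussBeta β) ≤ ENNReal.ofReal (Real.exp (q * α j * K')) := by
    intro j
    have haj : 0 ≤ q * α j := mul_nonneg hq.le (hα j)
    have hajD : q * α j ≤ D := by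
      have := Summable.le_tsum hsum j (fun b _ => hα b)
      exact mul_le_mul_of_nonneg_left this hq.le
    have h1 := gauss_I_le hτ hτβ haj hajD hguniv
    rw [← hLdef, ← hMdef, ← hKdef] at h1
    refine h1.trans ?_
    rw [hKK', ← ENNReal.ofReal_mul haj, ← ENNReal.ofReal_one,
      ← ENNReal.ofReal_add (by norm_num) (by positivity)]
    refine ENNReal.ofReal_le_ofReal ?_
    have := Real.add_one_le_exp (q * α j * K')
    linarith
  -- product formula
  have hprodn : ∀ n, ∫⁻ y, ∏ j ∈ Finset.range n, X j y ∂μ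
      = ∏ j ∈ Finset.range n, ∫⁻ y, X j y ∂μ := by
    intro n
    induction n with
    | zero => simp
    | succ n ih =>
      have hfun : (fun y => ∏ j ∈ Finset.range (n+1), X j y)
          = fun y => (∏ j ∈ Finset.range n, X j) y * X n y := by
        funext y
        rw [Finset.prod_apply, Finset.prod_range_succ]
      rw [hfun]
      have hmeasP : Measurable (∏ j ∈ Finset.range n, X j) := by
        rw [Finset.prod_fn]
        exact Finset.measurable_prod _ (fun j _ => hXmeas j)
      have hindP := hindX.indepFun_prod_range_succ hXmeas n
      have := ProbabilityTheory.lintegral_mul_eq_lintegral_mul_lintegral_of_indepFun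
        hmeasP (hXmeas n) hindP
      rw [Finset.prod_range_succ, ← ih]
      calc ∫⁻ y, (∏ j ∈ Finset.range n, X j) y * X n y ∂μ
          = ∫⁻ y, ((∏ j ∈ Finset.range n, X j) * X n) y ∂μ := by rfl
        _ = (∫⁻ y, (∏ j ∈ Finset.range n, X j) y ∂μ) * ∫⁻ y, X n y ∂μ := this
        _ = (∫⁻ y, ∏ j ∈ Finset.range n, X j y ∂μ) * ∫⁻ y, X n y ∂μ := by
            simp_rw [Finset.prod_apply]
  -- bound on the finite-dimensional integrals
  have hEn : ∀ n, ∫⁻ y, ENNReal.ofReal (Real.exp (q * ∑ j ∈ Finset.range n, α j * |y j| ^ τ)) ∂μ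
      ≤ ENNReal.ofReal (Real.exp (D * K')) := by
    intro n
    have heq : ∀ y : ℕ → ℝ, ENNReal.ofReal (Real.exp (q * ∑ j ∈ Finset.range n, α j * |y j| ^ τ))
        = ∏ j ∈ Finset.range n, X j y := by
      intro y
      rw [Finset.mul_sum]
      have harg : ∀ j, q * (α j * |y j| ^ τ) = q * α j * |y j| ^ τ := fun j => by ring
      simp_rw [harg]
      rw [Real.exp_sum, ENNReal.ofReal_prod_of_nonneg (fun j _ => (Real.exp_pos _).le)]
    simp_rw [heq]
    rw [hprodn n]
    calc ∏ j ∈ Finset.range n, ∫⁻ y, X j y ∂μ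
        ≤ ∏ j ∈ Finset.range n, ENNReal.ofReal (Real.exp (q * α j * K')) := by
          refine Finset.prod_le_prod' fun j _ => ?_
          rw [hXint j]; exact hIj j
      _ = ENNReal.ofReal (Real.exp (∑ j ∈ Finset.range n, q * α j * K')) := by
          rw [Real.exp_sum, ENNReal.ofReal_prod_of_nonneg (fun j _ => (Real.exp_pos _).le)]
      _ ≤ ENNReal.ofReal (Real.exp (D * K')) := by
          refine ENNReal.ofReal_le_ofReal (Real.exp_le_exp.mpr ?_)
          have h1 : ∑ j ∈ Finset.range n, q * α j * K'
              = (∑ j ∈ Finset.range n, α j) * (q * K') := by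
            rw [Finset.sum_mul]; exact Finset.sum_congr rfl fun j _ => by ring
          have h2 : ∑ j ∈ Finset.range n, α j ≤ ∑' j, α j :=
            Summable.sum_le_tsum _ (fun j _ => hα j) hsum
          rw [h1, hDdef]
          calc (∑ j ∈ Finset.range n, α j) * (q * K') ≤ (∑' j, α j) * (q * K') :=
                mul_le_mul_of_nonneg_right h2 (by positivity)
            _ = q * (∑' j, α j) * K' := by ring
  -- monotone family of partial-sum integrands
  set G : ℕ → (ℕ → ℝ) → ℝ≥0∞ := fun n y =>
    ENNReal.ofReal (Real.exp (q * ∑ j ∈ Finset.range n, α j * |y j| ^ τ)) with hGdef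
  have hGmeas : ∀ n, Measurable (G n) := by
    intro n
    refine Measurable.ennreal_ofReal (Measurable.exp (Measurable.const_mul ?_ q))
    exact Finset.measurable_sum _ fun j _ =>
      (by fun_prop)
  have hGmono : Monotone G := by
    intro m n hmn y
    refine ENNReal.ofReal_le_ofReal (Real.exp_le_exp.mpr (mul_le_mul_of_nonneg_left ?_ hq.le))
    exact Finset.sum_le_sum_of_subset_of_nonneg (Finset.range_subset_range.mpr hmn)
      (fun j _ _ => mul_nonneg (hα j) (Real.rpow_nonneg (abs_nonneg _) τ))
  -- pointwise bound for the full integrand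
  have hle : ∀ y : ℕ → ℝ, ENNReal.ofReal (Real.exp (q * ∑' j, α j * |y j| ^ τ)) ≤ ⨆ n, G n y := by
    intro y
    by_cases hy : Summable fun j => α j * |y j| ^ τ
    · have htends : Filter.Tendsto (fun n => G n y) Filter.atTop
          (nhds (ENNReal.ofReal (Real.exp (q * ∑' j, α j * |y j| ^ τ)))) := by
        refine (ENNReal.continuous_ofReal.tendsto _).comp ?_
        refine (Real.continuous_exp.tendsto _).comp ?_
        exact (hy.hasSum.tendsto_sum_nat).const_mul q
      exact le_of_tendsto' htends fun n => le_iSup (fun n => G n y) n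
    · rw [tsum_eq_zero_of_not_summable hy]
      refine le_trans ?_ (le_iSup (fun n => G n y) 0)
      simp [hGdef]
  -- conclusion
  have halg : ∀ y : ℕ → ℝ, ENNReal.ofReal ((c * Real.exp (-∑' j, α j * |y j| ^ τ))⁻¹ ^ q)
      = ENNReal.ofReal (c⁻¹ ^ q) * ENNReal.ofReal (Real.exp (q * ∑' j, α j * |y j| ^ τ)) := by
    intro y
    set s : ℝ := ∑' j, α j * |y j| ^ τ with hs
    have h1 : (c * Real.exp (-s))⁻¹ = c⁻¹ * Real.exp s := by
      rw [mul_inv, ← Real.exp_neg, neg_neg]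
    rw [h1, Real.mul_rpow (by positivity) (Real.exp_pos s).le, ← Real.exp_mul, mul_comm s q,
      ENNReal.ofReal_mul (by positivity)]
  calc ∫⁻ y in {y : ℕ → ℝ | Summable fun j => α j * |y j| ^ τ},
        ENNReal.ofReal ((c * Real.exp (-∑' j, α j * |y j| ^ τ))⁻¹ ^ q) ∂μ
      = ∫⁻ y in {y : ℕ → ℝ | Summable fun j => α j * |y j| ^ τ},
          ENNReal.ofReal (c⁻¹ ^ q) *
            ENNReal.ofReal (Real.exp (q * ∑' j, α j * |y j| ^ τ)) ∂μ :=
        lintegral_congr fun y => halg y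
    _ = ENNReal.ofReal (c⁻¹ ^ q) * ∫⁻ y in {y : ℕ → ℝ | Summable fun j => α j * |y j| ^ τ},
          ENNReal.ofReal (Real.exp (q * ∑' j, α j * |y j| ^ τ)) ∂μ :=
        lintegral_const_mul' _ _ ENNReal.ofReal_ne_top
    _ ≤ ENNReal.ofReal (c⁻¹ ^ q) * ∫⁻ y in {y : ℕ → ℝ | Summable fun j => α j * |y j| ^ τ},
          (⨆ n, G n y) ∂μ := by
        exact mul_le_mul_right (lintegral_mono fun y => hle y) _
    _ ≤ ENNReal.ofReal (c⁻¹ ^ q) * ∫⁻ y, (⨆ n, G n y) ∂μ :=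
        mul_le_mul_right (setLIntegral_le_lintegral _ _) _
    _ = ENNReal.ofReal (c⁻¹ ^ q) * ⨆ n, ∫⁻ y, G n y ∂μ := by
        rw [lintegral_iSup hGmeas hGmono]
    _ ≤ ENNReal.ofReal (c⁻¹ ^ q) * ENNReal.ofReal (Real.exp (D * K')) :=
        mul_le_mul_right (iSup_le fun n => hEn n) _
    _ < ⊤ := ENNReal.mul_lt_top ENNReal.ofReal_lt_top ENNReal.ofReal_lt_top
end
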